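/- Let f_k(r) = r^k e^{-r}/k!, fix a > 1 and T > 0, and set t = θT for a fixed θ ∈ (0,1). Then the limit as k → ∞ of (∫_{ak}^{ak+t} f_k(r) dr)/(∫_{ak}^{ak+T} f_k(r) dr) equals (1 − e^{−t(1−1/a)})/(1 − e^{−T(1−1/a)}). -/

import Mathlib

open MeasureTheory Filter Topology

/-- The gamma density `f_k(r) = r^k e^{-r}/k!`. -/
noncomputable def gammaDens (k : ℕ) (r : ℝ) : ℝ := r ^ k * Real.exp (-r) / (Nat.factorial k)

/-- Value of the limiting integral. -/
lemma exp_integral_aux (c s : ℝ) (hc : 0 < c) :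
    ∫ u in (0:ℝ)..s, Real.exp (-(c * u)) = (1 - Real.exp (-(s * c))) / c := by
  have h : ∀ u ∈ Set.uIcc (0:ℝ) s, HasDerivAt (fun x => -Real.exp (-(c * x)) / c)
      (Real.exp (-(c * u))) u := by
    intro u _
    have h1 : HasDerivAt (fun x : ℝ => -(c * x)) (-c) u := by
      simpa using ((hasDerivAt_id u).const_mul c).fun_neg
    have h2 := (Real.hasDerivAt_exp (-(c * u))).comp u h1
    have h3 := (h2.neg).div_const c
    exact h3.congr_deriv (by field_simp [hc.ne'])
  rw [intervalIntegral.integral_eq_sub_of_hasDerivAt h]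
  · rw [mul_comm s c]
    rw [mul_zero, neg_zero, Real.exp_zero]
    field_simp
    ring
  · apply Continuous.intervalIntegrable
    continuity

lemma J_tendsto (a : ℝ) (ha : 1 < a) (s : ℝ) (hs : 0 ≤ s) :
    Tendsto (fun k : ℕ => ∫ u in (0:ℝ)..s, (1 + u / (a * k)) ^ k * Real.exp (-u)) atTop
      (𝓝 ((1 - Real.exp (-(s * (1 - 1/a)))) / (1 - 1/a))) := by
  have ha0 : (0:ℝ) < a := by linarith
  have hc : 0 < 1 - 1/a := by
    have : 1/a < 1 := by rw [div_lt_one ha0]; exact ha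
    linarith
  have key : Tendsto (fun k : ℕ => ∫ u in (0:ℝ)..s, (1 + u / (a * k)) ^ k * Real.exp (-u)) atTop
      (𝓝 (∫ u in (0:ℝ)..s, Real.exp (-((1 - 1/a) * u)))) := by
    apply intervalIntegral.tendsto_integral_filter_of_dominated_convergence (fun _ => (1:ℝ))
    · filter_upwards with k
      apply Continuous.aestronglyMeasurable
      continuity
    · filter_upwards [eventually_ge_atTop 1] with k hk
      filter_upwards with u hu
      rw [Set.uIoc_of_le hs] at hu
      obtain ⟨hu0, hus⟩ := hu
      have hu0' : 0 ≤ u := le_of_lt hu0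
      have hk0 : (0:ℝ) < k := by exact_mod_cast hk
      have hdiv : 0 ≤ u / (a * k) := div_nonneg hu0' (by positivity)
      have hb : (1 + u / (a * k)) ^ k ≤ Real.exp (u / a) := by
        calc (1 + u / (a * k)) ^ k ≤ (Real.exp (u / (a * k))) ^ k := by
              apply pow_le_pow_left₀ (by linarith)
              linarith [Real.add_one_le_exp (u / (a * k))]
          _ = Real.exp (u / (a * k) * k) := by rw [← Real.exp_nat_mul]; ring_nf
          _ ≤ Real.exp (u / a) := by
              apply Real.exp_le_exp.2
              apply le_of_eq
              field_simp
      have hpos : (0:ℝ) ≤ (1 + u / (a * k)) ^ k := by positivity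
      rw [Real.norm_eq_abs, abs_of_nonneg (by positivity)]
      calc (1 + u / (a * k)) ^ k * Real.exp (-u) ≤ Real.exp (u / a) * Real.exp (-u) :=
            mul_le_mul_of_nonneg_right hb (Real.exp_pos _).le
        _ = Real.exp (u / a - u) := by rw [← Real.exp_add]; ring_nf
        _ ≤ 1 := by
            rw [Real.exp_le_one_iff]
            have : u / a ≤ u := by
              rw [div_le_iff₀ ha0]
              nlinarith
            linarith
    · apply Continuous.intervalIntegrable; continuity
    · filter_upwards with u _
      have h1 : Tendsto (fun k : ℕ => (1 + u / (a * k)) ^ k) atTop (𝓝 (Real.exp (u/a))) := by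
        refine (Real.tendsto_one_add_div_pow_exp (u/a)).congr fun k => ?_
        rw [div_div]
      have h3 := h1.mul_const (Real.exp (-u))
      convert h3 using 2
      rw [← Real.exp_add]
      congr 1
      field_simp
      ring
  have heq : (∫ u in (0:ℝ)..s, Real.exp (-((1 - 1/a) * u)))
      = (1 - Real.exp (-(s * (1 - 1/a)))) / (1 - 1/a) := exp_integral_aux _ s hc
  rwa [heq] at key

theorem stmt_10 (a T θ : ℝ) (ha : 1 < a) (hT : 0 < T) (hθ0 : 0 < θ) (hθ1 : θ < 1)
    (t : ℝ) (ht : t = θ * T) :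
    Tendsto (fun k : ℕ =>
        (∫ r in (a * k)..(a * k + t), gammaDens k r) /
          (∫ r in (a * k)..(a * k + T), gammaDens k r))
      atTop
      (nhds ((1 - Real.exp (-t * (1 - 1 / a))) / (1 - Real.exp (-T * (1 - 1 / a))))) := by
  have ha0 : (0:ℝ) < a := by linarith
  have hc : 0 < 1 - 1/a := by
    have : 1/a < 1 := by rw [div_lt_one ha0]; exact ha
    linarith
  have ht0 : 0 < t := by rw [ht]; positivity
  set c := 1 - 1/a with hcdef
  -- nonvanishing of denominator limit
  have hden : (1 - Real.exp (-(T * c))) / c ≠ 0 := by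
    have : Real.exp (-(T * c)) < 1 := by
      rw [Real.exp_lt_one_iff]
      nlinarith
    exact ne_of_gt (div_pos (by linarith) hc)
  -- limit of the ratio of J integrals
  have hJ : Tendsto (fun k : ℕ =>
      (∫ u in (0:ℝ)..t, (1 + u / (a * k)) ^ k * Real.exp (-u)) /
        (∫ u in (0:ℝ)..T, (1 + u / (a * k)) ^ k * Real.exp (-u))) atTop
      (𝓝 (((1 - Real.exp (-(t * c))) / c) / ((1 - Real.exp (-(T * c))) / c))) :=
    (J_tendsto a ha t ht0.le).div (J_tendsto a ha T hT.le) hden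
  have hval : ((1 - Real.exp (-(t * c))) / c) / ((1 - Real.exp (-(T * c))) / c)
      = (1 - Real.exp (-t * (1 - 1 / a))) / (1 - Real.exp (-T * (1 - 1 / a))) := by
    rw [div_div_div_cancel_right₀ (ne_of_gt hc)]
    congr 2 <;> rw [hcdef] <;> ring
  rw [← hval]
  apply hJ.congr'
  filter_upwards [eventually_ge_atTop 1] with k hk
  have hk0 : (0:ℝ) < (k:ℝ) := by exact_mod_cast hk
  have hak : (0:ℝ) < a * k := by positivity
  -- rewrite the interval integrals via translation
  have key : ∀ s : ℝ, (∫ r in (a * k)..(a * k + s), gammaDens k r)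
      = ((a*k)^k * Real.exp (-(a*k)) / (Nat.factorial k)) *
        ∫ u in (0:ℝ)..s, (1 + u / (a * k)) ^ k * Real.exp (-u) := by
    intro s
    have h1 : (∫ u in (0:ℝ)..s, gammaDens k (u + a * k))
        = ∫ r in (a * k)..(a * k + s), gammaDens k r := by
      rw [intervalIntegral.integral_comp_add_right (fun r => gammaDens k r) (a*k)]
      rw [zero_add, add_comm s (a * (k:ℝ))]
    rw [← h1, ← intervalIntegral.integral_const_mul]
    apply intervalIntegral.integral_congr
    intro u _
    simp only [gammaDens]
    have hne : a * (k:ℝ) ≠ 0 := ne_of_gt hak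
    have h3 : Real.exp (-(u + a * (k:ℝ))) = Real.exp (-(a * (k:ℝ))) * Real.exp (-u) := by
      rw [← Real.exp_add]; ring_nf
    have h2 : u + a * (k:ℝ) = (a * k) * (1 + u / (a * k)) := by field_simp; ring
    rw [h3, h2, mul_pow]
    ring
  rw [key t, key T]
  have hC : ((a*k)^k * Real.exp (-(a*k)) / (Nat.factorial k)) ≠ 0 := by positivity
  rw [mul_div_mul_left _ _ hC]
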